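/- Suppose L, R satisfy: L(·,x), R(·,x) càdlàg, L(t,·), R(t,·) strictly increasing, and inf_{t,x}(R(t,x) − L(t,x)) > 0. Given S càdlàg, if (X, K) and (X', K') are both solutions of the Skorokhod problem for S with constraints L, R (i.e., X = S + K, L(t,X_t) ≤ 0 ≤ R(t,X_t), K_{0−} = 0, K = K^r − K^l with K^r, K^l nondecreasing, ∫₀^∞ 1_{L(s,X_s)<0} dK^l_s = 0 and ∫₀^∞ 1_{R(s,X_s)>0} dK^r_s = 0, and similarly for (X',K')), then X = X' and K = K'. -/

import Mathlib

open Filter MeasureTheory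

/-- Right-continuous with left limits (on `[0,∞)`). -/
def Cadlag (f : ℝ → ℝ) : Prop :=
  (∀ t : ℝ, 0 ≤ t → ContinuousWithinAt f (Set.Ici t) t) ∧
  (∀ t : ℝ, 0 < t → ∃ l : ℝ, Tendsto f (nhdsWithin t (Set.Iio t)) (nhds l))

/-- `(X, Kr - Kl)` solves the Skorokhod problem for `S` with nonlinear
constraints `L, R`.  The nondecreasing right-continuous functions `Kr, Kl`
are extended by `0` on `(-∞, 0)` (so `K_{0-} = 0`), and the flat-off
conditions are expressed via their Stieltjes measures. -/
structure SkorokhodSolution (L R : ℝ → ℝ → ℝ) (S X : ℝ → ℝ)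
    (Kr Kl : StieltjesFunction ℝ) : Prop where
  add : ∀ t : ℝ, 0 ≤ t → X t = S t + (Kr t - Kl t)
  constraintL : ∀ t : ℝ, 0 ≤ t → L t (X t) ≤ 0
  constraintR : ∀ t : ℝ, 0 ≤ t → 0 ≤ R t (X t)
  initR : ∀ t : ℝ, t < 0 → Kr t = 0
  initL : ∀ t : ℝ, t < 0 → Kl t = 0
  flatL : Kl.measure {s : ℝ | 0 ≤ s ∧ L s (X s) < 0} = 0
  flatR : Kr.measure {s : ℝ | 0 ≤ s ∧ 0 < R s (X s)} = 0

/-- One-sided comparison for the Skorokhod problem. -/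
lemma skorokhod_le
    (L R : ℝ → ℝ → ℝ)
    (hmonoL : ∀ t : ℝ, 0 ≤ t → StrictMono (L t))
    (hmonoR : ∀ t : ℝ, 0 ≤ t → StrictMono (R t))
    (S X X' : ℝ → ℝ) (Kr Kl Kr' Kl' : StieltjesFunction ℝ)
    (hsol : SkorokhodSolution L R S X Kr Kl)
    (hsol' : SkorokhodSolution L R S X' Kr' Kl') :
    ∀ t : ℝ, 0 ≤ t → Kr t - Kl t ≤ Kr' t - Kl' t := by
  intro t ht
  by_contra hcon
  push_neg at hcon
  -- the set of times up to t where the comparison holds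
  set A : Set ℝ := {u : ℝ | u ≤ t ∧ Kr u - Kl u ≤ Kr' u - Kl' u} with hA
  have hneg : ∀ u : ℝ, u < 0 → Kr u - Kl u ≤ Kr' u - Kl' u := by
    intro u hu
    rw [hsol.initR u hu, hsol.initL u hu, hsol'.initR u hu, hsol'.initL u hu]
  have hAne : (-1 : ℝ) ∈ A := ⟨by linarith, hneg _ (by norm_num)⟩
  have hAbdd : BddAbove A := ⟨t, fun u hu => hu.1⟩
  set σ := sSup A with hσ
  have hσt : σ ≤ t := csSup_le ⟨_, hAne⟩ fun u hu => hu.1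
  have hσ0 : 0 ≤ σ := by
    by_contra h
    push_neg at h
    have : σ / 2 ∈ A := ⟨by linarith, hneg _ (by linarith)⟩
    have := le_csSup hAbdd this
    linarith
  -- positivity after σ
  have hpos : ∀ u : ℝ, σ < u → u ≤ t → Kr' u - Kl' u < Kr u - Kl u := by
    intro u h1 h2
    by_contra h
    push_neg at h
    exact absurd (le_csSup hAbdd ⟨h2, h⟩) (not_le.2 h1)
  have hXgt : ∀ u : ℝ, σ < u → u ≤ t → X' u < X u := by
    intro u h1 h2
    have hu0 : (0:ℝ) ≤ u := le_of_lt (lt_of_le_of_lt hσ0 h1)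
    have := hpos u h1 h2
    rw [hsol.add u hu0, hsol'.add u hu0]
    linarith
  -- measures vanish on (σ, t]
  have hsubR : Set.Ioc σ t ⊆ {s : ℝ | 0 ≤ s ∧ 0 < R s (X s)} := by
    intro u hu
    have hu0 : (0:ℝ) ≤ u := le_of_lt (lt_of_le_of_lt hσ0 hu.1)
    refine ⟨hu0, lt_of_le_of_lt (hsol'.constraintR u hu0) ?_⟩
    exact hmonoR u hu0 (hXgt u hu.1 hu.2)
  have hsubL : Set.Ioc σ t ⊆ {s : ℝ | 0 ≤ s ∧ L s (X' s) < 0} := by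
    intro u hu
    have hu0 : (0:ℝ) ≤ u := le_of_lt (lt_of_le_of_lt hσ0 hu.1)
    refine ⟨hu0, lt_of_lt_of_le ?_ (hsol.constraintL u hu0)⟩
    exact hmonoL u hu0 (hXgt u hu.1 hu.2)
  have hμr : Kr.measure (Set.Ioc σ t) = 0 :=
    measure_mono_null hsubR hsol.flatR
  have hμl' : Kl'.measure (Set.Ioc σ t) = 0 :=
    measure_mono_null hsubL hsol'.flatL
  by_cases hσA : Kr σ - Kl σ ≤ Kr' σ - Kl' σ
  · -- σ itself satisfies comparison; show it persists to t
    rcases eq_or_lt_of_le hσt with h | h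
    · rw [h] at hσA; linarith
    · have e1 : Kr t = Kr σ := by
        have := Kr.measure_Ioc σ t
        rw [hμr] at this
        have h2 : Kr t - Kr σ ≤ 0 := ENNReal.ofReal_eq_zero.1 this.symm
        have h3 : Kr σ ≤ Kr t := Kr.mono h.le
        linarith
      have e2 : Kl' t = Kl' σ := by
        have := Kl'.measure_Ioc σ t
        rw [hμl'] at this
        have h2 : Kl' t - Kl' σ ≤ 0 := ENNReal.ofReal_eq_zero.1 this.symm
        have h3 : Kl' σ ≤ Kl' t := Kl'.mono h.le
        linarith
      have h3 : Kl σ ≤ Kl t := Kl.mono h.le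
      have h4 : Kr' σ ≤ Kr' t := Kr'.mono h.le
      rw [e1, e2] at hcon
      linarith
  · -- comparison fails at σ; derive contradiction via jump analysis
    push_neg at hσA
    have hXσ : X' σ < X σ := by
      rw [hsol.add σ hσ0, hsol'.add σ hσ0]; linarith
    have hμrσ : Kr.measure {σ} = 0 := by
      refine measure_mono_null ?_ hsol.flatR
      intro u hu
      rw [Set.mem_singleton_iff] at hu
      subst hu
      exact ⟨hσ0, lt_of_le_of_lt (hsol'.constraintR σ hσ0) (hmonoR σ hσ0 hXσ)⟩
    have hμl'σ : Kl'.measure {σ} = 0 := by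
      refine measure_mono_null ?_ hsol'.flatL
      intro u hu
      rw [Set.mem_singleton_iff] at hu
      subst hu
      exact ⟨hσ0, lt_of_lt_of_le (hmonoL σ hσ0 hXσ) (hsol.constraintL σ hσ0)⟩
    -- no jump of Kr, Kl' at σ
    have e1 : Kr σ = Function.leftLim Kr σ := by
      have := Kr.measure_singleton σ
      rw [hμrσ] at this
      have h2 : Kr σ - Function.leftLim Kr σ ≤ 0 := ENNReal.ofReal_eq_zero.1 this.symm
      have h3 : Function.leftLim Kr σ ≤ Kr σ := Kr.mono.leftLim_le le_rfl
      linarith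
    have e2 : Kl' σ = Function.leftLim Kl' σ := by
      have := Kl'.measure_singleton σ
      rw [hμl'σ] at this
      have h2 : Kl' σ - Function.leftLim Kl' σ ≤ 0 := ENNReal.ofReal_eq_zero.1 this.symm
      have h3 : Function.leftLim Kl' σ ≤ Kl' σ := Kl'.mono.leftLim_le le_rfl
      linarith
    -- left limit of the difference is ≤ 0
    set Lℓ : ℝ := Function.leftLim Kr σ - Function.leftLim Kl σ
        - Function.leftLim Kr' σ + Function.leftLim Kl' σ with hLℓ
    have htend : Tendsto (fun u => Kr u - Kl u - Kr' u + Kl' u) (nhdsWithin σ (Set.Iio σ))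
        (nhds Lℓ) := by
      exact (((Kr.mono.tendsto_leftLim σ).sub (Kl.mono.tendsto_leftLim σ)).sub
        (Kr'.mono.tendsto_leftLim σ)).add (Kl'.mono.tendsto_leftLim σ)
    have hLℓ0 : Lℓ ≤ 0 := by
      by_contra hL
      push_neg at hL
      have hev : ∀ᶠ u in nhdsWithin σ (Set.Iio σ),
          0 < Kr u - Kl u - Kr' u + Kl' u := htend.eventually (eventually_gt_nhds hL)
      rw [eventually_iff, mem_nhdsLT_iff_exists_Ioo_subset] at hev
      obtain ⟨b, hb, hsub⟩ := hev
      -- find a point of A in (b, σ)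
      obtain ⟨u, huA, hbu⟩ := exists_lt_of_lt_csSup ⟨_, hAne⟩ (show b < σ from hb)
      have huσ : u < σ := by
        rcases lt_or_eq_of_le (le_csSup hAbdd huA) with h | h
        · exact h
        · exfalso; rw [h] at huA; exact absurd huA.2 (not_le.2 hσA)
      have := hsub ⟨hbu, huσ⟩
      have := huA.2
      simp only [Set.mem_setOf_eq] at *
      linarith
    -- conclude f σ ≤ 0, contradiction
    have h3 : Function.leftLim Kl σ ≤ Kl σ := Kl.mono.leftLim_le le_rfl
    have h4 : Function.leftLim Kr' σ ≤ Kr' σ := Kr'.mono.leftLim_le le_rfl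
    rw [hLℓ] at hLℓ0
    rw [e1, e2] at hσA
    linarith

theorem skorokhod_problem_uniqueness
    (L R : ℝ → ℝ → ℝ)
    (hLcadlag : ∀ x : ℝ, Cadlag (fun t => L t x))
    (hRcadlag : ∀ x : ℝ, Cadlag (fun t => R t x))
    (hmonoL : ∀ t : ℝ, 0 ≤ t → StrictMono (L t))
    (hmonoR : ∀ t : ℝ, 0 ≤ t → StrictMono (R t))
    (hgap : ∃ α : ℝ, 0 < α ∧ ∀ t : ℝ, 0 ≤ t → ∀ x : ℝ, α ≤ R t x - L t x)
    (S X X' : ℝ → ℝ) (Kr Kl Kr' Kl' : StieltjesFunction ℝ)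
    (hS : Cadlag S)
    (hsol : SkorokhodSolution L R S X Kr Kl)
    (hsol' : SkorokhodSolution L R S X' Kr' Kl') :
    ∀ t : ℝ, 0 ≤ t → X t = X' t ∧ Kr t - Kl t = Kr' t - Kl' t := by
  intro t ht
  have h1 := skorokhod_le L R hmonoL hmonoR S X X' Kr Kl Kr' Kl' hsol hsol' t ht
  have h2 := skorokhod_le L R hmonoL hmonoR S X' X Kr' Kl' Kr Kl hsol' hsol t ht
  have hK : Kr t - Kl t = Kr' t - Kl' t := le_antisymm h1 h2
  refine ⟨?_, hK⟩
  rw [hsol.add t ht, hsol'.add t ht, hK]
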